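/- Nonsmooth AID-FP convergence rate (Theorem 4.1(ii), set-valued form): let 0 ≤ q < 1, L, M ≥ 0, R > 0 and Δ ≥ 0. Let ℬ ⊆ ℝ^{d×(d+m)} be a nonempty bounded set of real block matrices with ‖ℬ₁‖_sup ≤ q, and let 𝒮 ⊆ ℝ^{d×m} be a nonempty bounded set with 𝒮 = ℬ(𝒮). Set δ := 1 if Δ > R and δ := 0 otherwise. Let 𝒜 ⊆ ℝ^{d×(d+m)} be a nonempty bounded set with ‖𝒜₁‖_sup ≤ q and gap(𝒜, ℬ) ≤ (L + (M/R)·δ)·Δ. Define the AID-FP sets by 𝒟⁰ := {0} and 𝒟ᵏ := 𝒜(𝒟^{k−1}) for k ≥ 1. Then for every k ≥ 1, with B := ‖ℬ₂‖_sup: gap(𝒟ᵏ, 𝒮) ≤ (B/(1−q))·qᵏ + ((B+1)/(1−q))·(L + (M/R)·δ)·((1−qᵏ)/(1−q))·Δ. -/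

import Mathlib

set_option maxHeartbeats 1000000

open scoped Matrix.Norms.L2Operator

/-- The excess (gap) of a set `𝒜` over a set `ℬ` in a normed additive group:
`gap 𝒜 ℬ = sup_{A ∈ 𝒜} inf_{B ∈ ℬ} ‖A - B‖`. -/
noncomputable def gap {E : Type*} [NormedAddCommGroup E] (𝒜 ℬ : Set E) : ℝ :=
  ⨆ A : 𝒜, ⨅ B : ℬ, ‖(A : E) - (B : E)‖

/-- `‖𝒜‖_sup = sup_{A ∈ 𝒜} ‖A‖`. -/
noncomputable def supNorm {E : Type*} [NormedAddCommGroup E] (𝒜 : Set E) : ℝ :=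
  ⨆ A : 𝒜, ‖(A : E)‖

/-- First block `A₁ ∈ ℝ^{n×p₁}` of a block matrix `A = [A₁, A₂] ∈ ℝ^{n×(p₁+p₂)}`. -/
def blk1 {n p₁ p₂ : ℕ} (A : Matrix (Fin n) (Fin (p₁ + p₂)) ℝ) :
    Matrix (Fin n) (Fin p₁) ℝ :=
  A.submatrix id (Fin.castAdd p₂)

/-- Second block `A₂ ∈ ℝ^{n×p₂}` of a block matrix `A = [A₁, A₂] ∈ ℝ^{n×(p₁+p₂)}`. -/
def blk2 {n p₁ p₂ : ℕ} (A : Matrix (Fin n) (Fin (p₁ + p₂)) ℝ) :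
    Matrix (Fin n) (Fin p₂) ℝ :=
  A.submatrix id (Fin.natAdd p₁)

/-- The affine action `𝒜(𝒳) = {A₁ X + A₂ | [A₁, A₂] ∈ 𝒜, X ∈ 𝒳}` of a set of block
matrices `𝒜 ⊆ ℝ^{n×(p₁+p₂)}` on a set of matrices `𝒳 ⊆ ℝ^{p₁×p₂}`. -/
def affAct {n p₁ p₂ : ℕ} (𝒜 : Set (Matrix (Fin n) (Fin (p₁ + p₂)) ℝ))
    (𝒳 : Set (Matrix (Fin p₁) (Fin p₂) ℝ)) : Set (Matrix (Fin n) (Fin p₂) ℝ) :=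
  {Y | ∃ A ∈ 𝒜, ∃ X ∈ 𝒳, Y = blk1 A * X + blk2 A}

section aux

open Matrix

lemma norm_blk1_le {n p₁ p₂ : ℕ} (A : Matrix (Fin n) (Fin (p₁ + p₂)) ℝ) :
    ‖blk1 A‖ ≤ ‖A‖ := by
  rw [Matrix.l2_opNorm_def]
  refine ContinuousLinearMap.opNorm_le_bound _ (norm_nonneg A) fun x => ?_
  set x' : Fin p₁ → ℝ := (WithLp.equiv 2 _) x with hx'
  set y : EuclideanSpace ℝ (Fin (p₁ + p₂)) :=
    (WithLp.equiv 2 _).symm (Fin.append x' 0) with hy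
  have h1 : blk1 A *ᵥ x' = A *ᵥ (Fin.append x' 0) := by
    funext i
    simp only [blk1, Matrix.mulVec, dotProduct, Matrix.submatrix_apply, id]
    rw [Fin.sum_univ_add]
    simp
  have h2 : ‖y‖ = ‖x‖ := by
    rw [EuclideanSpace.norm_eq, EuclideanSpace.norm_eq]
    congr 1
    rw [Fin.sum_univ_add]
    simp [hy, hx']
  have h3 := Matrix.l2_opNorm_mulVec A y
  rw [h2] at h3
  calc ‖((toEuclideanLin ≪≫ₗ LinearMap.toContinuousLinearMap) (blk1 A)) x‖
      = ‖(EuclideanSpace.equiv (Fin n) ℝ).symm (blk1 A *ᵥ x')‖ := rfl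
    _ = ‖(EuclideanSpace.equiv (Fin n) ℝ).symm (A *ᵥ Fin.append x' 0)‖ := by rw [h1]
    _ ≤ ‖A‖ * ‖x‖ := h3

lemma norm_blk2_le {n p₁ p₂ : ℕ} (A : Matrix (Fin n) (Fin (p₁ + p₂)) ℝ) :
    ‖blk2 A‖ ≤ ‖A‖ := by
  rw [Matrix.l2_opNorm_def]
  refine ContinuousLinearMap.opNorm_le_bound _ (norm_nonneg A) fun x => ?_
  set x' : Fin p₂ → ℝ := (WithLp.equiv 2 _) x with hx'
  set y : EuclideanSpace ℝ (Fin (p₁ + p₂)) :=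
    (WithLp.equiv 2 _).symm (Fin.append 0 x') with hy
  have h1 : blk2 A *ᵥ x' = A *ᵥ (Fin.append 0 x') := by
    funext i
    simp only [blk2, Matrix.mulVec, dotProduct, Matrix.submatrix_apply, id]
    rw [Fin.sum_univ_add]
    simp
  have h2 : ‖y‖ = ‖x‖ := by
    rw [EuclideanSpace.norm_eq, EuclideanSpace.norm_eq]
    congr 1
    rw [Fin.sum_univ_add]
    simp [hy, hx']
  have h3 := Matrix.l2_opNorm_mulVec A y
  rw [h2] at h3
  calc ‖((toEuclideanLin ≪≫ₗ LinearMap.toContinuousLinearMap) (blk2 A)) x‖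
      = ‖(EuclideanSpace.equiv (Fin n) ℝ).symm (blk2 A *ᵥ x')‖ := rfl
    _ = ‖(EuclideanSpace.equiv (Fin n) ℝ).symm (A *ᵥ Fin.append 0 x')‖ := by rw [h1]
    _ ≤ ‖A‖ * ‖x‖ := h3

lemma blk1_sub {n p₁ p₂ : ℕ} (A B : Matrix (Fin n) (Fin (p₁ + p₂)) ℝ) :
    blk1 (A - B) = blk1 A - blk1 B := rfl

lemma blk2_sub {n p₁ p₂ : ℕ} (A B : Matrix (Fin n) (Fin (p₁ + p₂)) ℝ) :
    blk2 (A - B) = blk2 A - blk2 B := rfl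

variable {E : Type*} [NormedAddCommGroup E]

lemma bddBelow_dist (A : E) (ℬ : Set E) :
    BddBelow (Set.range fun B : ℬ => ‖A - (B : E)‖) :=
  ⟨0, by rintro x ⟨B, rfl⟩; exact norm_nonneg _⟩

lemma infDist_le {A : E} {ℬ : Set E} {B₀ : E} (hB₀ : B₀ ∈ ℬ) :
    (⨅ B : ℬ, ‖A - (B : E)‖) ≤ ‖A - B₀‖ :=
  ciInf_le (bddBelow_dist A ℬ) (⟨B₀, hB₀⟩ : ℬ)

lemma gap_le {𝒜 ℬ : Set E} (hne : 𝒜.Nonempty) {c : ℝ}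
    (h : ∀ A ∈ 𝒜, (⨅ B : ℬ, ‖A - (B : E)‖) ≤ c) : gap 𝒜 ℬ ≤ c := by
  haveI := hne.to_subtype
  exact ciSup_le fun A => h A A.2

lemma le_supNorm {𝒜 : Set E} (hb : Bornology.IsBounded 𝒜) {A : E} (hA : A ∈ 𝒜) :
    ‖A‖ ≤ supNorm 𝒜 := by
  obtain ⟨r, hr⟩ := hb.exists_norm_le
  exact le_ciSup (f := fun A : 𝒜 => ‖(A : E)‖)
    ⟨r, by rintro x ⟨B, rfl⟩; exact hr _ B.2⟩ (⟨A, hA⟩ : 𝒜)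

lemma supNorm_nonneg {𝒜 : Set E} (hne : 𝒜.Nonempty) (hb : Bornology.IsBounded 𝒜) :
    0 ≤ supNorm 𝒜 := by
  obtain ⟨A, hA⟩ := hne
  exact le_trans (norm_nonneg A) (le_supNorm hb hA)

lemma le_gap {𝒜 ℬ : Set E} (h𝒜b : Bornology.IsBounded 𝒜) (hℬne : ℬ.Nonempty)
    {A : E} (hA : A ∈ 𝒜) : (⨅ B : ℬ, ‖A - (B : E)‖) ≤ gap 𝒜 ℬ := by
  obtain ⟨r, hr⟩ := h𝒜b.exists_norm_le
  obtain ⟨B₀, hB₀⟩ := hℬne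
  refine le_ciSup (f := fun A : 𝒜 => ⨅ B : ℬ, ‖(A : E) - (B : E)‖) ⟨r + ‖B₀‖, ?_⟩ (⟨A, hA⟩ : 𝒜)
  rintro x ⟨A', rfl⟩
  exact le_trans (infDist_le hB₀)
    ((norm_sub_le _ _).trans (add_le_add_left (hr _ A'.2) _))

lemma gap_nonneg {𝒜 ℬ : Set E} (h𝒜ne : 𝒜.Nonempty) (h𝒜b : Bornology.IsBounded 𝒜)
    (hℬne : ℬ.Nonempty) : 0 ≤ gap 𝒜 ℬ := by
  obtain ⟨A, hA⟩ := h𝒜ne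
  haveI := hℬne.to_subtype
  exact le_trans (Real.iInf_nonneg fun B => norm_nonneg _) (le_gap h𝒜b hℬne hA)

lemma exists_close {A : E} {ℬ : Set E} (hne : ℬ.Nonempty) {ε : ℝ} (hε : 0 < ε) :
    ∃ B ∈ ℬ, ‖A - B‖ < (⨅ B : ℬ, ‖A - (B : E)‖) + ε := by
  haveI := hne.to_subtype
  obtain ⟨⟨B, hB⟩, h⟩ := exists_lt_of_ciInf_lt
    (lt_add_of_pos_right (⨅ B : ℬ, ‖A - (B : E)‖) hε)
  exact ⟨B, hB, h⟩

end aux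

/-- Nonsmooth AID-FP convergence rate (Theorem 4.1(ii), set-valued form). -/
theorem aidfp_rate {d m : ℕ} (q L M R Δ : ℝ)
    (hq0 : 0 ≤ q) (hq1 : q < 1) (hL : 0 ≤ L) (hM : 0 ≤ M) (hR : 0 < R) (hΔ : 0 ≤ Δ)
    (ℬ : Set (Matrix (Fin d) (Fin (d + m)) ℝ))
    (hℬne : ℬ.Nonempty) (hℬb : Bornology.IsBounded ℬ)
    (hℬ₁ : supNorm (blk1 '' ℬ) ≤ q)
    (𝒮 : Set (Matrix (Fin d) (Fin m) ℝ))
    (h𝒮ne : 𝒮.Nonempty) (h𝒮b : Bornology.IsBounded 𝒮)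
    (h𝒮fix : 𝒮 = affAct ℬ 𝒮)
    (𝒜 : Set (Matrix (Fin d) (Fin (d + m)) ℝ))
    (h𝒜ne : 𝒜.Nonempty) (h𝒜b : Bornology.IsBounded 𝒜)
    (h𝒜₁ : supNorm (blk1 '' 𝒜) ≤ q)
    (h𝒜gap : gap 𝒜 ℬ ≤ (L + (M / R) * (if R < Δ then 1 else 0)) * Δ)
    (𝒟 : ℕ → Set (Matrix (Fin d) (Fin m) ℝ))
    (h𝒟0 : 𝒟 0 = {0})
    (h𝒟succ : ∀ k, 𝒟 (k + 1) = affAct 𝒜 (𝒟 k)) :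
    ∀ k : ℕ, 1 ≤ k →
      gap (𝒟 k) 𝒮 ≤
        supNorm (blk2 '' ℬ) / (1 - q) * q ^ k +
          (supNorm (blk2 '' ℬ) + 1) / (1 - q) *
            (L + (M / R) * (if R < Δ then 1 else 0)) * ((1 - q ^ k) / (1 - q)) * Δ := by
  intro k _
  set δ : ℝ := if R < Δ then 1 else 0 with hδ
  have hδ0 : 0 ≤ δ := by rw [hδ]; split <;> norm_num
  set C : ℝ := (L + M / R * δ) * Δ with hC
  have hC0 : 0 ≤ C :=
    mul_nonneg (add_nonneg hL (mul_nonneg (div_nonneg hM hR.le) hδ0)) hΔ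
  have h1q : 0 < 1 - q := by linarith
  obtain ⟨rB, hrB⟩ := hℬb.exists_norm_le
  obtain ⟨rA, hrA⟩ := h𝒜b.exists_norm_le
  obtain ⟨A₀, hA₀⟩ := id h𝒜ne
  have hrA0 : 0 ≤ rA := le_trans (norm_nonneg A₀) (hrA A₀ hA₀)
  have hblk1ℬb : Bornology.IsBounded (blk1 '' ℬ) := by
    rw [isBounded_iff_forall_norm_le]
    exact ⟨rB, by rintro x ⟨B, hB, rfl⟩; exact (norm_blk1_le B).trans (hrB B hB)⟩
  have hblk2ℬb : Bornology.IsBounded (blk2 '' ℬ) := by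
    rw [isBounded_iff_forall_norm_le]
    exact ⟨rB, by rintro x ⟨B, hB, rfl⟩; exact (norm_blk2_le B).trans (hrB B hB)⟩
  have hblk1𝒜b : Bornology.IsBounded (blk1 '' 𝒜) := by
    rw [isBounded_iff_forall_norm_le]
    exact ⟨rA, by rintro x ⟨A, hA, rfl⟩; exact (norm_blk1_le A).trans (hrA A hA)⟩
  have hB1 : ∀ B ∈ ℬ, ‖blk1 B‖ ≤ q :=
    fun B hB => (le_supNorm hblk1ℬb ⟨B, hB, rfl⟩).trans hℬ₁
  have hA1 : ∀ A ∈ 𝒜, ‖blk1 A‖ ≤ q :=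
    fun A hA => (le_supNorm hblk1𝒜b ⟨A, hA, rfl⟩).trans h𝒜₁
  set B2 : ℝ := supNorm (blk2 '' ℬ) with hB2def
  have hB2el : ∀ B ∈ ℬ, ‖blk2 B‖ ≤ B2 := fun B hB => le_supNorm hblk2ℬb ⟨B, hB, rfl⟩
  set SB : ℝ := supNorm 𝒮 with hSBdef
  have hSel : ∀ S ∈ 𝒮, ‖S‖ ≤ SB := fun S hS => le_supNorm h𝒮b hS
  have hSB0 : 0 ≤ SB := supNorm_nonneg h𝒮ne h𝒮b
  have hSB' : SB * (1 - q) ≤ B2 := by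
    have h : SB ≤ q * SB + B2 := by
      haveI := h𝒮ne.to_subtype
      refine ciSup_le fun S => ?_
      have hS : (S : Matrix (Fin d) (Fin m) ℝ) ∈ affAct ℬ 𝒮 :=
        (Set.ext_iff.1 h𝒮fix _).1 S.2
      obtain ⟨Bm, hBm, S', hS', hEq⟩ := hS
      calc ‖(S : Matrix (Fin d) (Fin m) ℝ)‖ = ‖blk1 Bm * S' + blk2 Bm‖ := by rw [hEq]
        _ ≤ ‖blk1 Bm * S'‖ + ‖blk2 Bm‖ := norm_add_le _ _
        _ ≤ ‖blk1 Bm‖ * ‖S'‖ + B2 :=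
            add_le_add (Matrix.l2_opNorm_mul _ _) (hB2el _ hBm)
        _ ≤ q * SB + B2 :=
            add_le_add_left
              (mul_le_mul (hB1 _ hBm) (hSel _ hS') (norm_nonneg _) hq0) _
    nlinarith
  have hSB : SB ≤ B2 / (1 - q) := by rw [le_div_iff₀ h1q]; exact hSB'
  have hB2_0 : 0 ≤ B2 := supNorm_nonneg (hℬne.image blk2) hblk2ℬb
  have hgapC : gap 𝒜 ℬ ≤ C := h𝒜gap
  have hgap0 : 0 ≤ gap 𝒜 ℬ := gap_nonneg h𝒜ne h𝒜b hℬne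
  -- nonemptiness and boundedness of the iterates
  have hD : ∀ n, (𝒟 n).Nonempty ∧ Bornology.IsBounded (𝒟 n) := by
    intro n
    induction n with
    | zero =>
      rw [h𝒟0]
      exact ⟨⟨0, rfl⟩, Bornology.IsBounded.subset (Metric.isBounded_ball (x := (0 : Matrix (Fin d) (Fin m) ℝ)) (r := 1)) (by intro x hx; rw [hx]; simp)⟩
    | succ n ih =>
      obtain ⟨⟨X₀, hX₀⟩, hbd⟩ := ih
      obtain ⟨r, hr⟩ := hbd.exists_norm_le
      constructor
      · rw [h𝒟succ]
        exact ⟨_, A₀, hA₀, X₀, hX₀, rfl⟩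
      · rw [h𝒟succ, isBounded_iff_forall_norm_le]
        refine ⟨rA * max r 0 + rA, ?_⟩
        rintro Y ⟨A, hA, X, hX, rfl⟩
        calc ‖blk1 A * X + blk2 A‖ ≤ ‖blk1 A‖ * ‖X‖ + ‖blk2 A‖ :=
              le_trans (norm_add_le _ _) (add_le_add_left (Matrix.l2_opNorm_mul _ _) _)
          _ ≤ rA * max r 0 + rA := by
              refine add_le_add (mul_le_mul ((norm_blk1_le A).trans (hrA A hA))
                ((hr X hX).trans (le_max_left _ _)) (norm_nonneg _) hrA0)
                ((norm_blk2_le A).trans (hrA A hA))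
  -- the one-step recurrence
  have hrec : ∀ n, gap (𝒟 (n + 1)) 𝒮 ≤ q * gap (𝒟 n) 𝒮 + (SB + 1) * gap 𝒜 ℬ := by
    intro n
    obtain ⟨hDne, hDbd⟩ := hD n
    refine gap_le (hD (n + 1)).1 fun Y hY => ?_
    rw [h𝒟succ] at hY
    obtain ⟨A, hA, X, hX, rfl⟩ := hY
    refine le_of_forall_pos_le_add fun ε hε => ?_
    have hSB1 : (0 : ℝ) < SB + 1 := by linarith
    obtain ⟨Bc, hBc, hABc⟩ := exists_close (A := A) hℬne
      (show (0 : ℝ) < ε / (2 * (SB + 1)) by positivity)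
    have hABgap : ‖A - Bc‖ ≤ gap 𝒜 ℬ + ε / (2 * (SB + 1)) :=
      le_trans hABc.le (add_le_add_left (le_gap h𝒜b hℬne hA) _)
    obtain ⟨S', hS', hXS'⟩ := exists_close (A := X) h𝒮ne (show (0 : ℝ) < ε / 2 by positivity)
    have hXS : ‖X - S'‖ ≤ gap (𝒟 n) 𝒮 + ε / 2 :=
      le_trans hXS'.le (add_le_add_left (le_gap hDbd h𝒮ne hX) _)
    have hmem : blk1 Bc * S' + blk2 Bc ∈ 𝒮 := by
      rw [h𝒮fix]
      exact ⟨Bc, hBc, S', hS', rfl⟩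
    refine le_trans (infDist_le hmem) ?_
    have hsplit : (blk1 A * X + blk2 A) - (blk1 Bc * S' + blk2 Bc)
        = blk1 A * (X - S') + (blk1 (A - Bc)) * S' + blk2 (A - Bc) := by
      rw [blk1_sub, blk2_sub, Matrix.sub_mul, Matrix.mul_sub]
      abel
    have key : ‖(blk1 A * X + blk2 A) - (blk1 Bc * S' + blk2 Bc)‖
        ≤ q * ‖X - S'‖ + ‖A - Bc‖ * (SB + 1) := by
      rw [hsplit]
      calc ‖blk1 A * (X - S') + (blk1 (A - Bc)) * S' + blk2 (A - Bc)‖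
          ≤ ‖blk1 A * (X - S')‖ + ‖blk1 (A - Bc) * S'‖ + ‖blk2 (A - Bc)‖ :=
            norm_add₃_le
        _ ≤ q * ‖X - S'‖ + ‖A - Bc‖ * SB + ‖A - Bc‖ := by
            refine add_le_add (add_le_add ?_ ?_) (norm_blk2_le _)
            · exact le_trans (Matrix.l2_opNorm_mul _ _)
                (mul_le_mul_of_nonneg_right (hA1 A hA) (norm_nonneg _))
            · exact le_trans (Matrix.l2_opNorm_mul _ _)
                (mul_le_mul (norm_blk1_le _) (hSel _ hS') (norm_nonneg _)
                  (norm_nonneg _))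
        _ = q * ‖X - S'‖ + ‖A - Bc‖ * (SB + 1) := by ring
    have h1 : q * ‖X - S'‖ ≤ q * (gap (𝒟 n) 𝒮 + ε / 2) :=
      mul_le_mul_of_nonneg_left hXS hq0
    have h2 : ‖A - Bc‖ * (SB + 1) ≤ (gap 𝒜 ℬ + ε / (2 * (SB + 1))) * (SB + 1) :=
      mul_le_mul_of_nonneg_right hABgap hSB1.le
    have h3 : (gap 𝒜 ℬ + ε / (2 * (SB + 1))) * (SB + 1)
        = gap 𝒜 ℬ * (SB + 1) + ε / 2 := by
      field_simp
    have hq2 : q * (ε / 2) ≤ ε / 2 := by nlinarith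
    calc ‖(blk1 A * X + blk2 A) - (blk1 Bc * S' + blk2 Bc)‖
        ≤ q * ‖X - S'‖ + ‖A - Bc‖ * (SB + 1) := key
      _ ≤ q * (gap (𝒟 n) 𝒮 + ε / 2) + (gap 𝒜 ℬ * (SB + 1) + ε / 2) := by
          rw [← h3]; exact add_le_add h1 h2
      _ ≤ q * gap (𝒟 n) 𝒮 + (SB + 1) * gap 𝒜 ℬ + ε := by
          rw [mul_add]
          linarith [hq2]
  -- iterate the recurrence
  have hiter : ∀ n, gap (𝒟 n) 𝒮 ≤
      q ^ n * gap (𝒟 0) 𝒮 + (∑ i ∈ Finset.range n, q ^ i) * ((SB + 1) * gap 𝒜 ℬ) := by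
    intro n
    induction n with
    | zero => simp
    | succ n ih =>
      calc gap (𝒟 (n + 1)) 𝒮 ≤ q * gap (𝒟 n) 𝒮 + (SB + 1) * gap 𝒜 ℬ := hrec n
        _ ≤ q * (q ^ n * gap (𝒟 0) 𝒮
              + (∑ i ∈ Finset.range n, q ^ i) * ((SB + 1) * gap 𝒜 ℬ))
            + (SB + 1) * gap 𝒜 ℬ :=
            add_le_add_left (mul_le_mul_of_nonneg_left ih hq0) _
        _ = q ^ (n + 1) * gap (𝒟 0) 𝒮
            + (∑ i ∈ Finset.range (n + 1), q ^ i) * ((SB + 1) * gap 𝒜 ℬ) := by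
            rw [geom_sum_succ]
            ring
  have hg0 : gap (𝒟 0) 𝒮 ≤ SB := by
    rw [h𝒟0]
    refine gap_le (𝒜 := ({0} : Set (Matrix (Fin d) (Fin m) ℝ)))
      (Set.singleton_nonempty 0) fun A hA => ?_
    rcases Set.mem_singleton_iff.1 hA with rfl
    obtain ⟨S₀, hS₀⟩ := h𝒮ne
    refine le_trans (infDist_le hS₀) ?_
    rw [zero_sub, norm_neg]
    exact hSel S₀ hS₀
  have hgeo : (∑ i ∈ Finset.range k, q ^ i) = (1 - q ^ k) / (1 - q) := by
    rw [geom_sum_eq hq1.ne k, div_eq_div_iff (by linarith) (by linarith)]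
    ring
  have hqk1 : q ^ k ≤ 1 := pow_le_one₀ hq0 hq1.le
  have hqk0 : 0 ≤ q ^ k := pow_nonneg hq0 k
  have hfrac : 0 ≤ (1 - q ^ k) / (1 - q) := div_nonneg (by linarith) h1q.le
  have hSB1' : SB + 1 ≤ (B2 + 1) / (1 - q) := by
    rw [le_div_iff₀ h1q]
    nlinarith
  have hmain : (SB + 1) * gap 𝒜 ℬ ≤ (B2 + 1) / (1 - q) * C :=
    mul_le_mul hSB1' hgapC hgap0 (by positivity)
  calc gap (𝒟 k) 𝒮
      ≤ q ^ k * gap (𝒟 0) 𝒮 + ((1 - q ^ k) / (1 - q)) * ((SB + 1) * gap 𝒜 ℬ) := by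
        rw [← hgeo]; exact hiter k
    _ ≤ q ^ k * (B2 / (1 - q)) + ((1 - q ^ k) / (1 - q)) * ((B2 + 1) / (1 - q) * C) := by
        refine add_le_add (mul_le_mul_of_nonneg_left (hg0.trans hSB) hqk0)
          (mul_le_mul_of_nonneg_left hmain hfrac)
    _ = B2 / (1 - q) * q ^ k
        + (B2 + 1) / (1 - q) * (L + M / R * δ) * ((1 - q ^ k) / (1 - q)) * Δ := by
        rw [hC]; ring
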